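/- With κ as above, the right derivative of κ at 0 equals a + ∫_{(0,1)} (log v) ρ(dv), where the integral may be −∞. In particular, if a < ∫_{(0,1)} (−log v) ρ(dv), then κ is strictly decreasing on a right neighbourhood of 0, and hence inf_{q≥0} κ(q) < κ(0). -/

import Mathlib

open MeasureTheory Set Filter Topology

open scoped ENNReal NNReal

lemma aux_slope_anti {v h eps : ℝ} (hv : v ∈ Ioo (0:ℝ) 1) (hh : 0 < h) (he : h ≤ eps) :
    (1 - v ^ eps) / eps ≤ (1 - v ^ h) / h := by
  obtain ⟨hv0, hv1⟩ := hv
  have he0 : 0 < eps := lt_of_lt_of_le hh he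
  set t := h / eps with htdef
  have ht0 : 0 ≤ t := by positivity
  have ht1 : 0 ≤ 1 - t := by
    have : t ≤ 1 := (div_le_one he0).mpr he
    linarith
  have key : v ^ h ≤ (1 - t) + t * v ^ eps := by
    have hconv := convexOn_exp.2 (mem_univ (0:ℝ)) (mem_univ (eps * Real.log v))
      ht1 ht0 (by ring)
    simp only [smul_eq_mul, mul_zero, zero_add, Real.exp_zero, mul_one] at hconv
    have h2 : v ^ h = Real.exp (h * Real.log v) := by
      rw [Real.rpow_def_of_pos hv0, mul_comm]
    have h3 : v ^ eps = Real.exp (eps * Real.log v) := by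
      rw [Real.rpow_def_of_pos hv0, mul_comm]
    have h4 : t * (eps * Real.log v) = h * Real.log v := by
      rw [htdef, ← mul_assoc, div_mul_cancel₀ h he0.ne']
    rw [h2, h3, ← h4]
    exact hconv
  rw [div_le_div_iff₀ he0 hh]
  have hte : eps * t = h := by rw [htdef]; field_simp
  have h5 : eps * v ^ h ≤ (eps - h) + h * v ^ eps := by
    have h7 := mul_le_mul_of_nonneg_left key he0.le
    have h6 : eps * (1 - t + t * v ^ eps) = eps - h + h * v ^ eps := by
      have : eps * (1 - t + t * v ^ eps) = eps - eps * t + (eps * t) * v ^ eps := by ring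
      rw [this, hte]
    linarith
  linarith

lemma aux_le_neg_log {v q : ℝ} (hv : v ∈ Ioo (0:ℝ) 1) (hq : 0 < q) :
    (1 - v ^ q) / q ≤ -Real.log v := by
  obtain ⟨hv0, _⟩ := hv
  have hpos : (0:ℝ) < v ^ q := Real.rpow_pos_of_pos hv0 q
  have hlog := Real.log_le_sub_one_of_pos hpos
  rw [Real.log_rpow hv0] at hlog
  rw [div_le_iff₀ hq]
  nlinarith

lemma aux_tendsto_slope {v : ℝ} (hv : v ∈ Ioo (0:ℝ) 1) :
    Tendsto (fun q => (1 - v ^ q) / q) (𝓝[>] (0:ℝ)) (𝓝 (-Real.log v)) := by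
  obtain ⟨hv0, _⟩ := hv
  have hder : HasDerivAt (fun q : ℝ => v ^ q) (v ^ (0:ℝ) * Real.log v) 0 :=
    (Real.hasStrictDerivAt_const_rpow hv0 0).hasDerivAt
  have hslope := hasDerivAt_iff_tendsto_slope.mp hder
  have h1 : Tendsto (fun q => (v ^ q - 1) / q) (𝓝[>] (0:ℝ)) (𝓝 (Real.log v)) := by
    have := hslope.mono_left (nhdsWithin_mono 0 (fun x hx => ne_of_gt hx))
    simp only [Real.rpow_zero, one_mul] at this
    refine this.congr (fun q => ?_)
    simp [slope_def_field, Real.rpow_zero]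
  have := h1.neg
  refine this.congr (fun q => ?_)
  ring

lemma aux_tendsto_prod {v : ℝ} (hv : v ∈ Ioo (0:ℝ) 1) :
    Tendsto (fun e => v ^ e * ((1 - v ^ e) / e)) (𝓝[>] (0:ℝ)) (𝓝 (-Real.log v)) := by
  have hv0 := hv.1
  have h1 : Tendsto (fun e : ℝ => v ^ e) (𝓝[>] (0:ℝ)) (𝓝 1) := by
    have : ContinuousAt (fun e : ℝ => v ^ e) 0 := by
      have : (fun e : ℝ => v ^ e) = fun e => Real.exp (Real.log v * e) := by
        funext e; rw [Real.rpow_def_of_pos hv0]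
      rw [this]
      fun_prop
    have h2 : ContinuousWithinAt (fun e : ℝ => v ^ e) (Ioi 0) 0 := this.continuousWithinAt
    rw [ContinuousWithinAt] at h2
    simpa [Real.rpow_zero] using h2
  have := h1.mul (aux_tendsto_slope hv)
  simpa using this

/-- The right derivative of the cumulant `κ` at `0` equals `a + ∫ log v ρ(dv)`
(possibly `−∞`, which is why the limit is taken in `EReal`); and if
`a < ∫ (−log v) ρ(dv)` then `κ` is strictly decreasing on a right neighbourhood of `0`,
hence `inf_{q ≥ 0} κ(q) < κ(0)`. -/
theorem cumulant_rightDeriv_at_zero (a k B : ℝ) (ha : 0 < a) (hk : 0 ≤ k)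
    (ρ : Measure ℝ) [IsFiniteMeasure ρ] (hsupp : ∀ᵐ v ∂ρ, v ∈ Ioo (0:ℝ) 1)
    (hB : ∫ v, v ∂ρ = B)
    (κ : ℝ → ℝ) (hκ : ∀ q, κ q = a * q + (∫ v, v ^ q ∂ρ) - (B + k)) :
    Tendsto (fun q => (((κ q - κ 0) / q : ℝ) : EReal)) (𝓝[>] (0:ℝ))
      (𝓝 ((a : EReal) - ((∫⁻ v, ENNReal.ofReal (-Real.log v) ∂ρ) : EReal)))
    ∧ ((ENNReal.ofReal a < ∫⁻ v, ENNReal.ofReal (-Real.log v) ∂ρ) →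
        (∃ ε > (0:ℝ), StrictAntiOn κ (Icc 0 ε)) ∧ sInf (κ '' Ici 0) < κ 0) := by
  have mrq : ∀ q : ℝ, 0 ≤ q → Measurable fun v : ℝ => v ^ q :=
    fun q hq => (Real.continuous_rpow_const hq).measurable
  set L := ∫⁻ v, ENNReal.ofReal (-Real.log v) ∂ρ with hLdef
  set G : ℝ → ℝ≥0∞ := fun q => ∫⁻ v, ENNReal.ofReal ((1 - v ^ q) / q) ∂ρ with hGdef
  have hint : ∀ q : ℝ, 0 ≤ q → Integrable (fun v => v ^ q) ρ := by
    intro q hq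
    refine (integrable_const (1:ℝ)).mono' ((mrq q hq).aestronglyMeasurable) ?_
    filter_upwards [hsupp] with v hv
    rw [Real.norm_eq_abs, abs_of_nonneg (Real.rpow_nonneg hv.1.le q)]
    exact Real.rpow_le_one hv.1.le hv.2.le hq
  have hGfin : ∀ q : ℝ, 0 < q → G q ≠ ⊤ := by
    intro q hq
    have hle : G q ≤ ENNReal.ofReal (1/q) * ρ univ := by
      rw [← lintegral_const]
      refine lintegral_mono_ae ?_
      filter_upwards [hsupp] with v hv
      refine ENNReal.ofReal_le_ofReal ?_
      have h1 : (0:ℝ) ≤ v ^ q := Real.rpow_nonneg hv.1.le q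
      exact (div_le_div_iff_of_pos_right hq).mpr (by linarith)
    exact ne_top_of_le_ne_top
      (ENNReal.mul_ne_top ENNReal.ofReal_ne_top (measure_ne_top ρ univ)) hle
  have hGle : ∀ q : ℝ, 0 < q → G q ≤ L := by
    intro q hq
    refine lintegral_mono_ae ?_
    filter_upwards [hsupp] with v hv
    exact ENNReal.ofReal_le_ofReal (aux_le_neg_log hv hq)
  have hrepr : ∀ q : ℝ, 0 < q → (κ q - κ 0) / q = a - (G q).toReal := by
    intro q hq
    have hone : (fun v : ℝ => v ^ (0:ℝ)) = fun _ : ℝ => (1:ℝ) := by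
      funext v; exact Real.rpow_zero v
    have hδ : κ q - κ 0 = a * q - ∫ v, (1 - v ^ q) ∂ρ := by
      rw [hκ q, hκ 0, integral_sub (integrable_const 1) (hint q hq.le), hone]
      ring
    have hGq : ∫ v, (1 - v ^ q) / q ∂ρ = (G q).toReal := by
      rw [integral_eq_lintegral_of_nonneg_ae (f := fun v : ℝ => (1 - v ^ q) / q) ?_
        (((measurable_const.sub (mrq q hq.le)).div_const q).aestronglyMeasurable)]
      filter_upwards [hsupp] with v hv
      have := Real.rpow_le_one hv.1.le hv.2.le hq.le
      have h1 : (0:ℝ) ≤ 1 - v ^ q := by linarith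
      positivity
    have hscale : ∫ v, (1 - v ^ q) ∂ρ = q * ∫ v, (1 - v ^ q) / q ∂ρ := by
      rw [← integral_const_mul]
      refine integral_congr_ae (Eventually.of_forall fun v => ?_)
      field_simp
    rw [hδ, hscale, hGq]
    field_simp
  have hGtend : Tendsto G (𝓝[>] (0:ℝ)) (𝓝 L) := by
    rw [tendsto_iff_seq_tendsto]
    intro u hu
    have hupos : ∀ᶠ n in atTop, u n ∈ Ioi (0:ℝ) := hu.eventually self_mem_nhdsWithin
    have hu0 : Tendsto u atTop (𝓝 0) := hu.mono_right nhdsWithin_le_nhds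
    set u' : ℕ → ℝ := fun n => if 0 < u n then u n else 1 with hu'def
    have heq : ∀ᶠ n in atTop, u n = u' n := hupos.mono fun n h => (if_pos h).symm
    have hu'pos : ∀ n, 0 < u' n := by
      intro n; by_cases h : 0 < u n <;> simp [hu'def, h]
    have hu'tend : Tendsto u' atTop (𝓝[>] (0:ℝ)) := by
      rw [tendsto_nhdsWithin_iff]
      exact ⟨hu0.congr' heq, Eventually.of_forall fun n => hu'pos n⟩
    have hGeq : (G ∘ u) =ᶠ[atTop] fun n => G (u' n) := heq.mono fun n h => congrArg G h
    refine tendsto_of_le_liminf_of_limsup_le ?_ ?_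
    · rw [liminf_congr hGeq]
      have hfatou := lintegral_liminf_le
        (f := fun n (v : ℝ) => ENNReal.ofReal ((1 - v ^ u' n) / u' n))
        (μ := ρ) (u := atTop)
        (fun n => ((measurable_const.sub (mrq _ (hu'pos n).le)).div_const _).ennreal_ofReal)
      refine le_trans (le_of_eq ?_) hfatou
      refine lintegral_congr_ae ?_
      filter_upwards [hsupp] with v hv
      exact (((ENNReal.continuous_ofReal.tendsto _).comp (aux_tendsto_slope hv)).comp
        hu'tend).liminf_eq.symm
    · refine limsup_le_of_le ?_ ?_
      · isBoundedDefault
      · filter_upwards [hupos] with n hn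
        exact hGle (u n) hn
  have hev : (fun q => (((κ q - κ 0) / q : ℝ) : EReal))
      =ᶠ[𝓝[>] (0:ℝ)] fun q => (((a - (G q).toReal : ℝ)) : EReal) := by
    filter_upwards [self_mem_nhdsWithin] with q hq
    rw [hrepr q hq]
  constructor
  · by_cases hLtop : L = ⊤
    · rw [hLtop, EReal.coe_ennreal_top, EReal.sub_top]
      refine Tendsto.congr' hev.symm ?_
      rw [EReal.tendsto_nhds_bot_iff_real]
      intro x
      have hev2 : ∀ᶠ q in 𝓝[>] (0:ℝ), ENNReal.ofReal (a - x) < G q := by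
        refine hGtend.eventually ?_
        rw [hLtop]
        exact Ioi_mem_nhds ENNReal.ofReal_lt_top
      filter_upwards [hev2, self_mem_nhdsWithin] with q h2 hq
      rw [EReal.coe_lt_coe_iff]
      have h3 : (ENNReal.ofReal (a - x)).toReal < (G q).toReal :=
        (ENNReal.toReal_lt_toReal ENNReal.ofReal_ne_top (hGfin q hq)).mpr h2
      have h4 : a - x ≤ (ENNReal.ofReal (a - x)).toReal := by
        rcases le_or_gt (a - x) 0 with h | h
        · exact h.trans ENNReal.toReal_nonneg
        · rw [ENNReal.toReal_ofReal h.le]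
      linarith
    · have h1 : Tendsto (fun q => a - (G q).toReal) (𝓝[>] (0:ℝ)) (𝓝 (a - L.toReal)) :=
        tendsto_const_nhds.sub ((ENNReal.tendsto_toReal hLtop).comp hGtend)
      have h3 : ((a - L.toReal : ℝ) : EReal) = (a : EReal) - (L : EReal) := by
        rw [EReal.coe_sub]
        congr 1
        rw [← EReal.toReal_coe_ennreal]
        exact EReal.coe_toReal (by simpa using hLtop) (EReal.coe_ennreal_ne_bot L)
      refine Tendsto.congr' hev.symm ?_
      rw [← h3]
      exact EReal.tendsto_coe.mpr h1
  · intro hlt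
    set u : ℕ → ℝ := fun n => ((n : ℝ) + 1)⁻¹ with hudef
    have hupos : ∀ n, 0 < u n := fun n => by positivity
    have hutend : Tendsto u atTop (𝓝[>] (0:ℝ)) := by
      rw [tendsto_nhdsWithin_iff]
      constructor
      · have := tendsto_one_div_add_atTop_nhds_zero_nat (𝕜 := ℝ)
        simpa [hudef, one_div] using this
      · exact Eventually.of_forall fun n => hupos n
    set A : ℕ → ℝ≥0∞ :=
      fun n => ∫⁻ v, ENNReal.ofReal (v ^ u n * ((1 - v ^ u n) / u n)) ∂ρ with hAdef
    have hgmeas : ∀ e : ℝ, 0 < e → Measurable fun v : ℝ => v ^ e * ((1 - v ^ e) / e) :=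
      fun e he => (mrq e he.le).mul ((measurable_const.sub (mrq e he.le)).div_const e)
    have hliminf : L ≤ liminf A atTop := by
      have hfatou := lintegral_liminf_le
        (f := fun n (v : ℝ) => ENNReal.ofReal (v ^ u n * ((1 - v ^ u n) / u n)))
        (μ := ρ) (u := atTop) (fun n => (hgmeas (u n) (hupos n)).ennreal_ofReal)
      refine le_trans (le_of_eq ?_) hfatou
      refine lintegral_congr_ae ?_
      filter_upwards [hsupp] with v hv
      exact (((ENNReal.continuous_ofReal.tendsto _).comp (aux_tendsto_prod hv)).comp
        hutend).liminf_eq.symm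
    obtain ⟨n, hn⟩ := (eventually_lt_of_lt_liminf (lt_of_lt_of_le hlt hliminf)).exists
    set ε := u n with hεdef
    have hε0 : 0 < ε := hupos n
    have hbound : ∀ᵐ v ∂ρ, v ^ ε * ((1 - v ^ ε) / ε) ∈ Icc (0:ℝ) (1/ε) := by
      filter_upwards [hsupp] with v hv
      have h1 : v ^ ε ≤ 1 := Real.rpow_le_one hv.1.le hv.2.le hε0.le
      have h2 : (0:ℝ) < v ^ ε := Real.rpow_pos_of_pos hv.1 ε
      constructor
      · have : (0:ℝ) ≤ 1 - v ^ ε := by linarith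
        positivity
      · have h3 : (1 - v ^ ε) / ε ≤ 1 / ε :=
          (div_le_div_iff_of_pos_right hε0).mpr (by linarith)
        calc v ^ ε * ((1 - v ^ ε) / ε) ≤ 1 * (1 / ε) := by
              apply mul_le_mul h1 h3 ?_ zero_le_one
              have : (0:ℝ) ≤ 1 - v ^ ε := by linarith
              positivity
          _ = 1 / ε := one_mul _
    have hAfin : A n ≠ ⊤ := by
      have hle : A n ≤ ENNReal.ofReal (1/ε) * ρ univ := by
        rw [← lintegral_const]
        refine lintegral_mono_ae ?_
        filter_upwards [hbound] with v hv
        exact ENNReal.ofReal_le_ofReal hv.2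
      exact ne_top_of_le_ne_top
        (ENNReal.mul_ne_top ENNReal.ofReal_ne_top (measure_ne_top ρ univ)) hle
    set c := (A n).toReal with hcdef
    have hac : a < c := by
      have := (ENNReal.toReal_lt_toReal ENNReal.ofReal_ne_top hAfin).mpr hn
      rwa [ENNReal.toReal_ofReal ha.le] at this
    have hgnn : 0 ≤ᵐ[ρ] fun v => v ^ ε * ((1 - v ^ ε) / ε) :=
      hbound.mono fun v hv => hv.1
    have hgint_eq : ∫ v, v ^ ε * ((1 - v ^ ε) / ε) ∂ρ = c := by
      rw [integral_eq_lintegral_of_nonneg_ae hgnn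
        (hgmeas ε hε0).aestronglyMeasurable]
    have hgint : Integrable (fun v => v ^ ε * ((1 - v ^ ε) / ε)) ρ := by
      refine (integrable_const (1/ε)).mono' (hgmeas ε hε0).aestronglyMeasurable ?_
      filter_upwards [hbound] with v hv
      rw [Real.norm_eq_abs, abs_of_nonneg hv.1]
      exact hv.2
    have hanti : StrictAntiOn κ (Icc 0 ε) := by
      intro x hx y hy hxy
      have key : ∀ᵐ v ∂ρ, v ^ y - v ^ x ≤ -((y - x) * (v ^ ε * ((1 - v ^ ε) / ε))) := by
        filter_upwards [hsupp] with v hv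
        obtain ⟨hv0, hv1⟩ := hv
        have hh0 : 0 < y - x := sub_pos.mpr hxy
        have hhe : y - x ≤ ε := by
          have := hx.1; have := hy.2; linarith
        have hslope : (1 - v ^ ε) / ε ≤ (1 - v ^ (y - x)) / (y - x) :=
          aux_slope_anti ⟨hv0, hv1⟩ hh0 hhe
        have hsplit : v ^ y = v ^ x * v ^ (y - x) := by
          rw [← Real.rpow_add hv0]; ring_nf
        have hvx : v ^ ε ≤ v ^ x :=
          Real.rpow_le_rpow_of_exponent_ge hv0 hv1.le hx.2
        have h1 : 0 ≤ 1 - v ^ (y - x) := by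
          have := Real.rpow_le_one hv0.le hv1.le hh0.le; linarith
        have h2 : (y - x) * ((1 - v ^ ε) / ε) ≤ 1 - v ^ (y - x) := by
          have := mul_le_mul_of_nonneg_left hslope hh0.le
          calc (y - x) * ((1 - v ^ ε) / ε) ≤ (y - x) * ((1 - v ^ (y - x)) / (y - x)) := this
            _ = 1 - v ^ (y - x) := by field_simp
        have hεnn : 0 ≤ (1 - v ^ ε) / ε := by
          have h4 : v ^ ε ≤ 1 := Real.rpow_le_one hv0.le hv1.le hε0.le
          have : (0:ℝ) ≤ 1 - v ^ ε := by linarith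
          positivity
        have h3 : v ^ ε * ((y - x) * ((1 - v ^ ε) / ε)) ≤ v ^ x * (1 - v ^ (y - x)) := by
          refine mul_le_mul hvx h2 ?_ (Real.rpow_nonneg hv0.le x)
          positivity
        rw [hsplit]
        nlinarith [h3]
      have hsub : κ y - κ x = a * (y - x) + ∫ v, (v ^ y - v ^ x) ∂ρ := by
        rw [hκ x, hκ y, integral_sub (hint y (hx.1.trans hxy.le)) (hint x hx.1)]
        ring
      have hmono : ∫ v, (v ^ y - v ^ x) ∂ρ
          ≤ ∫ v, -((y - x) * (v ^ ε * ((1 - v ^ ε) / ε))) ∂ρ :=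
        integral_mono_ae ((hint y (hx.1.trans hxy.le)).sub (hint x hx.1))
          ((hgint.const_mul (y - x)).neg) key
      have hval : ∫ v, -((y - x) * (v ^ ε * ((1 - v ^ ε) / ε))) ∂ρ = -((y - x) * c) := by
        rw [integral_neg, integral_const_mul, hgint_eq]
      have hfin : κ y - κ x ≤ (y - x) * (a - c) := by
        rw [hsub]; rw [hval] at hmono; nlinarith
      nlinarith [mul_pos (sub_pos.mpr hxy) (sub_pos.mpr hac)]
    refine ⟨⟨ε, hε0, hanti⟩, ?_⟩
    have hbdd : BddBelow (κ '' Ici 0) := by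
      refine ⟨-(B + k), ?_⟩
      rintro w ⟨q, hq, rfl⟩
      rw [hκ q]
      have h1 : 0 ≤ ∫ v, v ^ q ∂ρ := by
        refine integral_nonneg_of_ae ?_
        filter_upwards [hsupp] with v hv
        exact Real.rpow_nonneg hv.1.le q
      nlinarith [mul_nonneg ha.le hq]
    have h2 : κ ε < κ 0 := hanti ⟨le_refl 0, hε0.le⟩ ⟨hε0.le, le_refl ε⟩ hε0
    exact lt_of_le_of_lt (csInf_le hbdd ⟨ε, hε0.le, rfl⟩) h2
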